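/- In the setup below, equality κ_γ(t)²·sin²(η(t)) = w(t)⁴·κ_g(t)² holds for all t ∈ ℝ if and only if ⟨p, N(t)⟩ = 0 for all t ∈ ℝ, i.e., if and only if α is a timelike rectifying curve with respect to p. -/

import Mathlib

open Real

/-- The Minkowski scalar product on `ℝ⁴₁`:
`⟨x,y⟩ = -x₁y₁ + x₂y₂ + x₃y₃ + x₄y₄`. -/
noncomputable def mdot (x y : Fin 4 → ℝ) : ℝ :=
  -(x 0 * y 0) + x 1 * y 1 + x 2 * y 2 + x 3 * y 3

private lemma det4 (M : Matrix (Fin 4) (Fin 4) ℝ) : M.det =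
    M 0 0 * (M 1 1 * (M 2 2 * M 3 3 - M 2 3 * M 3 2) - M 1 2 * (M 2 1 * M 3 3 - M 2 3 * M 3 1) + M 1 3 * (M 2 1 * M 3 2 - M 2 2 * M 3 1))
  - M 0 1 * (M 1 0 * (M 2 2 * M 3 3 - M 2 3 * M 3 2) - M 1 2 * (M 2 0 * M 3 3 - M 2 3 * M 3 0) + M 1 3 * (M 2 0 * M 3 2 - M 2 2 * M 3 0))
  + M 0 2 * (M 1 0 * (M 2 1 * M 3 3 - M 2 3 * M 3 1) - M 1 1 * (M 2 0 * M 3 3 - M 2 3 * M 3 0) + M 1 3 * (M 2 0 * M 3 1 - M 2 1 * M 3 0))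
  - M 0 3 * (M 1 0 * (M 2 1 * M 3 2 - M 2 2 * M 3 1) - M 1 1 * (M 2 0 * M 3 2 - M 2 2 * M 3 0) + M 1 2 * (M 2 0 * M 3 1 - M 2 1 * M 3 0)) := by
  rw [Matrix.det_succ_row_zero]
  simp (config := { decide := true }) [Fin.sum_univ_four, Matrix.det_fin_three, Matrix.submatrix_apply,
    show Fin.succ (2:Fin 3) = (3:Fin 4) from rfl,
    show Fin.castSucc (2:Fin 3) = (2:Fin 4) from rfl,
    Fin.succAbove]
  ring

private lemma mdot_comm (x y : Fin 4 → ℝ) : mdot x y = mdot y x := by unfold mdot; ring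

private lemma mdot_add_left (x y z : Fin 4 → ℝ) : mdot (x + y) z = mdot x z + mdot y z := by
  unfold mdot; simp only [Pi.add_apply]; ring

private lemma mdot_add_right (x y z : Fin 4 → ℝ) : mdot x (y + z) = mdot x y + mdot x z := by
  unfold mdot; simp only [Pi.add_apply]; ring

private lemma mdot_smul_left (r : ℝ) (x y : Fin 4 → ℝ) : mdot (r • x) y = r * mdot x y := by
  unfold mdot; simp only [Pi.smul_apply, smul_eq_mul]; ring

private lemma mdot_smul_right (r : ℝ) (x y : Fin 4 → ℝ) : mdot x (r • y) = r * mdot x y := by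
  unfold mdot; simp only [Pi.smul_apply, smul_eq_mul]; ring

private lemma hasDerivAt_mdot {f g : ℝ → Fin 4 → ℝ} {f' g' : Fin 4 → ℝ} {t : ℝ}
    (hf : HasDerivAt f f' t) (hg : HasDerivAt g g' t) :
    HasDerivAt (fun u => mdot (f u) (g u)) (mdot f' (g t) + mdot (f t) g') t := by
  have hfi := fun i => hasDerivAt_pi.mp hf i
  have hgi := fun i => hasDerivAt_pi.mp hg i
  have h : HasDerivAt (fun u => -(f u 0 * g u 0) + f u 1 * g u 1 + f u 2 * g u 2 + f u 3 * g u 3)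
      (-(f' 0 * g t 0 + f t 0 * g' 0) + (f' 1 * g t 1 + f t 1 * g' 1)
        + (f' 2 * g t 2 + f t 2 * g' 2) + (f' 3 * g t 3 + f t 3 * g' 3)) t :=
    ((((hfi 0).mul (hgi 0)).neg.add ((hfi 1).mul (hgi 1))).add
      ((hfi 2).mul (hgi 2))).add ((hfi 3).mul (hgi 3))
  refine h.congr_deriv ?_
  unfold mdot; ring

private lemma gram4 (x y z u : Fin 4 → ℝ) :
    (Matrix.of ![x, y, z, u]).det ^ 2 * (-1) =
    mdot x x * (mdot y y * (mdot z z * mdot u u - mdot z u * mdot u z) - mdot y z * (mdot z y * mdot u u - mdot z u * mdot u y) + mdot y u * (mdot z y * mdot u z - mdot z z * mdot u y)) - mdot x y * (mdot y x * (mdot z z * mdot u u - mdot z u * mdot u z) - mdot y z * (mdot z x * mdot u u - mdot z u * mdot u x) + mdot y u * (mdot z x * mdot u z - mdot z z * mdot u x)) + mdot x z * (mdot y x * (mdot z y * mdot u u - mdot z u * mdot u y) - mdot y y * (mdot z x * mdot u u - mdot z u * mdot u x) + mdot y u * (mdot z x * mdot u y - mdot z y * mdot u x)) - mdot x u * (mdot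 y x * (mdot z y * mdot u z - mdot z z * mdot u y) - mdot y y * (mdot z x * mdot u z - mdot z z * mdot u x) + mdot y z * (mdot z x * mdot u y - mdot z y * mdot u x)) := by
  rw [det4]
  simp only [Matrix.of_apply, Matrix.cons_val_zero, Matrix.cons_val_one, Matrix.head_cons,
    Matrix.cons_val_two, Matrix.cons_val_three, Matrix.tail_cons, mdot]
  ring

set_option maxRecDepth 16000 in
set_option maxHeartbeats 3200000 in
/-- Equality `κ_γ² sin²(η) = w⁴ κ_g²` holds identically iff `α` is a timelike
rectifying curve with respect to `p`. -/
theorem extremal_equality_iff_rectifying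
    (p : Fin 4 → ℝ) (hp : mdot p p = 1)
    (γ : ℝ → Fin 4 → ℝ) (hγsm : ContDiff ℝ (⊤ : ℕ∞) γ)
    (hγ1 : ∀ t, mdot (γ t) (γ t) = 1)
    (hγp : ∀ t, mdot (γ t) p = 0)
    (hγ' : ∀ t, mdot (deriv γ t) (deriv γ t) = -1)
    (η : ℝ → ℝ) (hηsm : ContDiff ℝ (⊤ : ℕ∞) η)
    (hsinpos : ∀ t, 0 < Real.sin (η t))
    (htimelike : ∀ t, (deriv η t) ^ 2 < Real.sin (η t) ^ 2)
    (w : ℝ → ℝ)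
    (hw : ∀ t, w t = Real.sqrt (Real.sin (η t) ^ 2 - (deriv η t) ^ 2))
    (α : ℝ → Fin 4 → ℝ)
    (hα : ∀ t, α t = Real.cos (η t) • p + Real.sin (η t) • γ t)
    (T : ℝ → Fin 4 → ℝ) (hT : ∀ t, T t = (w t)⁻¹ • deriv α t)
    (N B : ℝ → Fin 4 → ℝ) (hNsm : ContDiff ℝ (⊤ : ℕ∞) N)
    (hBsm : ContDiff ℝ (⊤ : ℕ∞) B)
    (κg τg : ℝ → ℝ) (hκsm : ContDiff ℝ (⊤ : ℕ∞) κg)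
    (hτsm : ContDiff ℝ (⊤ : ℕ∞) τg)
    (hκpos : ∀ t, 0 < κg t)
    (hN1 : ∀ t, mdot (N t) (N t) = 1)
    (hB1 : ∀ t, mdot (B t) (B t) = 1)
    (hαT : ∀ t, mdot (α t) (T t) = 0)
    (hαN : ∀ t, mdot (α t) (N t) = 0)
    (hαB : ∀ t, mdot (α t) (B t) = 0)
    (hTN : ∀ t, mdot (T t) (N t) = 0)
    (hTB : ∀ t, mdot (T t) (B t) = 0)
    (hNB : ∀ t, mdot (N t) (B t) = 0)
    (hF1 : ∀ t, deriv T t = w t • (α t + κg t • N t))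
    (hF2 : ∀ t, deriv N t = w t • (κg t • T t + τg t • B t))
    (hF3 : ∀ t, deriv B t = -(w t * τg t) • N t)
    (κγ : ℝ → ℝ)
    (hκγ : ∀ t, κγ t = (Matrix.of ![γ t, deriv γ t, deriv (deriv γ) t, p]).det)
    :
    (∀ t, κγ t ^ 2 * Real.sin (η t) ^ 2 = w t ^ 4 * κg t ^ 2) ↔
      (∀ t, mdot p (N t) = 0) := by
  have hwpos : ∀ u, 0 < w u := fun u => by
    rw [hw u]; exact Real.sqrt_pos.mpr (by nlinarith [htimelike u])
  have hwne : ∀ u, w u ≠ 0 := fun u => (hwpos u).ne'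
  have hw2 : ∀ u, w u ^ 2 = Real.sin (η u) ^ 2 - deriv η u ^ 2 := fun u => by
    rw [hw u]; exact Real.sq_sqrt (by nlinarith [htimelike u])
  have hγd : Differentiable ℝ γ := hγsm.differentiable (by simp)
  have hγ'd : Differentiable ℝ (deriv γ) :=
    (contDiff_infty_iff_deriv.mp hγsm).2.differentiable (by simp)
  have hηd : Differentiable ℝ η := hηsm.differentiable (by simp)
  have hη'd : Differentiable ℝ (deriv η) :=
    (contDiff_infty_iff_deriv.mp hηsm).2.differentiable (by simp)
  have hpγ : ∀ u, mdot p (γ u) = 0 := fun u => (mdot_comm _ _).trans (hγp u)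
  have hγ'p : ∀ u, mdot (deriv γ u) p = 0 := by
    intro u
    have h1 : HasDerivAt (fun v => mdot (γ v) p) (mdot (deriv γ u) p + mdot (γ u) 0) u :=
      hasDerivAt_mdot (hγd u).hasDerivAt (hasDerivAt_const u p)
    have h2 : (fun v => mdot (γ v) p) = fun _ => (0 : ℝ) := funext hγp
    rw [h2] at h1
    have h3 := (hasDerivAt_const u (0:ℝ)).unique h1
    have h4 : mdot (γ u) (0 : Fin 4 → ℝ) = 0 := by unfold mdot; simp
    linarith
  have hpγ' : ∀ u, mdot p (deriv γ u) = 0 := fun u => (mdot_comm _ _).trans (hγ'p u)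
  have hγγ' : ∀ u, mdot (γ u) (deriv γ u) = 0 := by
    intro u
    have h1 : HasDerivAt (fun v => mdot (γ v) (γ v))
        (mdot (deriv γ u) (γ u) + mdot (γ u) (deriv γ u)) u :=
      hasDerivAt_mdot (hγd u).hasDerivAt (hγd u).hasDerivAt
    have h2 : (fun v => mdot (γ v) (γ v)) = fun _ => (1 : ℝ) := funext hγ1
    rw [h2] at h1
    have h3 := (hasDerivAt_const u (1:ℝ)).unique h1
    have h4 : mdot (deriv γ u) (γ u) = mdot (γ u) (deriv γ u) := mdot_comm _ _
    linarith
  have hγ'γ : ∀ u, mdot (deriv γ u) (γ u) = 0 := fun u => (mdot_comm _ _).trans (hγγ' u)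
  -- first derivative of α
  have hαd : ∀ u, HasDerivAt α ((-(Real.sin (η u) * deriv η u)) • p
      + (Real.cos (η u) * deriv η u) • γ u + Real.sin (η u) • deriv γ u) u := by
    intro u
    have h1 : HasDerivAt (fun v => Real.cos (η v)) (-Real.sin (η u) * deriv η u) u :=
      (Real.hasDerivAt_cos (η u)).comp u (hηd u).hasDerivAt
    have h2 : HasDerivAt (fun v => Real.sin (η v)) (Real.cos (η u) * deriv η u) u :=
      (Real.hasDerivAt_sin (η u)).comp u (hηd u).hasDerivAt
    have h3 := (h1.smul (hasDerivAt_const u p)).add (h2.smul (hγd u).hasDerivAt)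
    have hfun : α = fun v => Real.cos (η v) • p + Real.sin (η v) • γ v := funext hα
    rw [hfun]
    refine h3.congr_deriv ?_
    funext i
    simp only [Pi.add_apply, Pi.smul_apply, Pi.zero_apply, smul_eq_mul]
    ring
  have hderivα : ∀ u, deriv α u = (-(Real.sin (η u) * deriv η u)) • p
      + (Real.cos (η u) * deriv η u) • γ u + Real.sin (η u) • deriv γ u :=
    fun u => (hαd u).deriv
  have hwT : ∀ u, w u • T u = deriv α u := by
    intro u
    rw [hT u, smul_smul, mul_inv_cancel₀ (hwne u), one_smul]
  -- basic products with the frame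
  have hαα : ∀ u, mdot (α u) (α u) = 1 := by
    intro u
    rw [hα u]
    simp only [mdot_add_left, mdot_add_right, mdot_smul_left, mdot_smul_right, hp,
      hpγ u, hγp u, hγ1 u]
    nlinarith [Real.sin_sq_add_cos_sq (η u)]
  have hdd' : ∀ u, mdot (deriv α u) (deriv α u) = deriv η u ^ 2 - Real.sin (η u) ^ 2 := by
    intro u
    rw [hderivα u]
    simp only [mdot_add_left, mdot_add_right, mdot_smul_left, mdot_smul_right, hp,
      hpγ u, hγp u, hpγ' u, hγ'p u, hγ1 u, hγγ' u, hγ'γ u, hγ' u]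
    nlinarith [Real.sin_sq_add_cos_sq (η u)]
  have hTT : ∀ u, mdot (T u) (T u) = -1 := by
    intro u
    rw [hT u]
    simp only [mdot_smul_left, mdot_smul_right, hdd' u]
    have h5 : deriv η u ^ 2 - Real.sin (η u) ^ 2 = -(w u ^ 2) := by rw [hw2 u]; ring
    rw [h5]
    field_simp [hwne u]
  have hpα : ∀ u, mdot p (α u) = Real.cos (η u) := by
    intro u
    rw [hα u]
    simp only [mdot_add_right, mdot_smul_right, hp, hpγ u]
    ring
  have hpT : ∀ u, mdot p (T u) = (w u)⁻¹ * (-(Real.sin (η u) * deriv η u)) := by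
    intro u
    rw [hT u, hderivα u]
    simp only [mdot_smul_right, mdot_add_right, hp, hpγ u, hpγ' u]
    ring
  have key : ∀ t, (κγ t ^ 2 * Real.sin (η t) ^ 2 = w t ^ 4 * κg t ^ 2 ↔ mdot p (N t) = 0) := by
    intro t
    -- second derivative of α, coordinate form
    have h1 : HasDerivAt (fun v => Real.sin (η v)) (Real.cos (η t) * deriv η t) t :=
      (Real.hasDerivAt_sin (η t)).comp t (hηd t).hasDerivAt
    have h2 : HasDerivAt (fun v => Real.cos (η v)) (-Real.sin (η t) * deriv η t) t :=
      (Real.hasDerivAt_cos (η t)).comp t (hηd t).hasDerivAt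
    have h3 : HasDerivAt (deriv η) (deriv (deriv η) t) t := (hη'd t).hasDerivAt
    have c1 : HasDerivAt (fun v => -(Real.sin (η v) * deriv η v))
        (-(Real.cos (η t) * deriv η t * deriv η t + Real.sin (η t) * deriv (deriv η) t)) t :=
      (h1.mul h3).neg
    have c2 : HasDerivAt (fun v => Real.cos (η v) * deriv η v)
        (-Real.sin (η t) * deriv η t * deriv η t + Real.cos (η t) * deriv (deriv η) t) t :=
      h2.mul h3
    have hdd0 := (c1.smul (hasDerivAt_const t p)).add
      ((c2.smul (hγd t).hasDerivAt).add (h1.smul (hγ'd t).hasDerivAt))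
    have hfun2 : deriv α = fun u => (-(Real.sin (η u) * deriv η u)) • p
        + (Real.cos (η u) * deriv η u) • γ u + Real.sin (η u) • deriv γ u := funext hderivα
    have hdd : HasDerivAt (deriv α)
        ((-(Real.cos (η t) * deriv η t ^ 2 + Real.sin (η t) * deriv (deriv η) t)) • p
          + (Real.cos (η t) * deriv (deriv η) t - Real.sin (η t) * deriv η t ^ 2) • γ t
          + (2 * (Real.cos (η t) * deriv η t)) • deriv γ t
          + Real.sin (η t) • deriv (deriv γ) t) t := by
      rw [hfun2]
      have : (fun u => (-(Real.sin (η u) * deriv η u)) • p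
          + (Real.cos (η u) * deriv η u) • γ u + Real.sin (η u) • deriv γ u)
          = fun u => (-(Real.sin (η u) * deriv η u)) • p
          + ((Real.cos (η u) * deriv η u) • γ u + Real.sin (η u) • deriv γ u) := by
        funext u; rw [add_assoc]
      rw [this]
      refine hdd0.congr_deriv ?_
      funext i
      simp only [Pi.add_apply, Pi.smul_apply, Pi.zero_apply, smul_eq_mul]
      ring
    have hD2a : deriv (deriv α) t
        = (-(Real.cos (η t) * deriv η t ^ 2 + Real.sin (η t) * deriv (deriv η) t)) • p
          + (Real.cos (η t) * deriv (deriv η) t - Real.sin (η t) * deriv η t ^ 2) • γ t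
          + (2 * (Real.cos (η t) * deriv η t)) • deriv γ t
          + Real.sin (η t) • deriv (deriv γ) t := hdd.deriv
    -- second derivative of α, frame form
    have hwdiff : HasDerivAt w (deriv w t) t := by
      have hfw : w = fun u => Real.sqrt (Real.sin (η u) ^ 2 - deriv η u ^ 2) := funext hw
      have hg : DifferentiableAt ℝ (fun u => Real.sin (η u) ^ 2 - deriv η u ^ 2) t :=
        (((Real.differentiable_sin.comp hηd).pow 2).sub (hη'd.pow 2)) t
      have hne : Real.sin (η t) ^ 2 - deriv η t ^ 2 ≠ 0 := by nlinarith [htimelike t]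
      have : DifferentiableAt ℝ w t := by
        rw [hfw]; exact hg.sqrt hne
      exact this.hasDerivAt
    have hTdiff : DifferentiableAt ℝ T t := by
      apply differentiableAt_of_deriv_ne_zero
      rw [hF1 t]
      intro h0
      have h5 : mdot (w t • (α t + κg t • N t)) (w t • (α t + κg t • N t)) = 0 := by
        rw [h0]; unfold mdot; simp
      have hNα : mdot (N t) (α t) = 0 := (mdot_comm _ _).trans (hαN t)
      have h6 : mdot (w t • (α t + κg t • N t)) (w t • (α t + κg t • N t))
          = w t ^ 2 * (1 + κg t ^ 2) := by
        simp only [mdot_smul_left, mdot_smul_right, mdot_add_left, mdot_add_right,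
          hαα t, hN1 t, hαN t, hNα]
        ring
      nlinarith [hwpos t, hκpos t, sq_nonneg (κg t), h5, h6]
    have hframe := hwdiff.smul hTdiff.hasDerivAt
    have hfun3 : (w • T) = deriv α := funext hwT
    rw [hfun3] at hframe
    have hD2b := hframe.deriv
    rw [hF1 t] at hD2b
    -- determinant computations
    have facta : (Matrix.of ![α t, deriv α t, deriv (deriv α) t, p]).det
        = Real.sin (η t) ^ 3 * κγ t := by
      rw [hκγ t, det4, det4]
      simp only [Matrix.of_apply, Matrix.cons_val_zero, Matrix.cons_val_one, Matrix.head_cons,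
        Matrix.cons_val_two, Matrix.cons_val_three, Matrix.tail_cons, hα t, hderivα t, hD2a,
        Pi.add_apply, Pi.smul_apply, smul_eq_mul]
      ring
    have hwT' : deriv α t = w t • T t := (hwT t).symm
    have factb : (Matrix.of ![α t, deriv α t, deriv (deriv α) t, p]).det
        = w t ^ 3 * κg t * (Matrix.of ![α t, T t, N t, p]).det := by
      rw [det4, det4]
      simp only [Matrix.of_apply, Matrix.cons_val_zero, Matrix.cons_val_one, Matrix.head_cons,
        Matrix.cons_val_two, Matrix.cons_val_three, Matrix.tail_cons, hwT', hD2b,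
        Pi.add_apply, Pi.smul_apply, smul_eq_mul]
      ring
    have hTα : mdot (T t) (α t) = 0 := (mdot_comm _ _).trans (hαT t)
    have hNα : mdot (N t) (α t) = 0 := (mdot_comm _ _).trans (hαN t)
    have hNT : mdot (N t) (T t) = 0 := (mdot_comm _ _).trans (hTN t)
    have hαp : mdot (α t) p = Real.cos (η t) := (mdot_comm _ _).trans (hpα t)
    have hTp : mdot (T t) p = mdot p (T t) := mdot_comm _ _
    have hNp : mdot (N t) p = mdot p (N t) := mdot_comm _ _
    have factc : (Matrix.of ![α t, T t, N t, p]).det ^ 2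
        = 1 - Real.cos (η t) ^ 2 + mdot p (T t) ^ 2 - mdot p (N t) ^ 2 := by
      have hg := gram4 (α t) (T t) (N t) p
      simp only [hαα t, hTT t, hN1 t, hp, hαT t, hTα, hαN t, hNα, hTN t, hNT,
        hαp, hpα t, hTp, hNp] at hg
      linear_combination -hg
    have hb1 : w t * mdot p (T t) = -(Real.sin (η t) * deriv η t) := by
      rw [hpT t, ← mul_assoc, mul_inv_cancel₀ (hwne t), one_mul]
    have hmain : κγ t ^ 2 * Real.sin (η t) ^ 6
        = w t ^ 4 * κg t ^ 2 * Real.sin (η t) ^ 4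
          - w t ^ 6 * κg t ^ 2 * mdot p (N t) ^ 2 := by
      have h6 : (Real.sin (η t) ^ 3 * κγ t) ^ 2
          = (w t ^ 3 * κg t) ^ 2 * (Matrix.of ![α t, T t, N t, p]).det ^ 2 := by
        rw [← facta, factb]; ring
      rw [factc] at h6
      linear_combination h6 + (w t)^4*(κg t)^2*(Real.sin (η t))^2 * hw2 t
        - (w t)^6*(κg t)^2 * Real.sin_sq_add_cos_sq (η t)
        + (w t)^4*(κg t)^2*((w t)*(mdot p (T t)) - Real.sin (η t)*(deriv η t)) * hb1
    constructor
    · intro heq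
      have h8 : (w t ^ 6 * κg t ^ 2) * mdot p (N t) ^ 2 = 0 := by
        linear_combination hmain - Real.sin (η t) ^ 4 * heq
      rcases mul_eq_zero.mp h8 with h | h
      · exact absurd h (mul_pos (pow_pos (hwpos t) 6) (pow_pos (hκpos t) 2)).ne'
      · exact pow_eq_zero_iff two_ne_zero |>.mp h
    · intro hm
      have h10 : (κγ t ^ 2 * Real.sin (η t) ^ 2 - w t ^ 4 * κg t ^ 2) * Real.sin (η t) ^ 4 = 0 := by
        linear_combination hmain - w t ^ 6 * κg t ^ 2 * mdot p (N t) * hm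
      rcases mul_eq_zero.mp h10 with h | h
      · linarith [h]
      · exact absurd h (pow_pos (hsinpos t) 4).ne'
  exact forall_congr' key
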